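/- Let (R, m) be a d-dimensional excellent Cohen–Macaulay normal local domain of characteristic p > 0, I = (f₁, …, f_d) a parameter ideal, and n, l positive integers with dl − n ≥ 1. Then the inclusion closure(I^{dl−n}) + I^{[l]} ⊆ (I^{[l]})^{*I^n} holds, where closure denotes integral closure of ideals, I^{[l]} = (f₁^l, …, f_d^l), and (I^{[l]})^{*I^n} is the I^n-tight closure of I^{[l]}. -/

import Mathlib

/-- The complement of the union of the minimal primes of `R`. -/
def ringReg (R : Type*) [CommRing R] : Set R :=
  {c | ∀ P ∈ minimalPrimes R, c ∉ P}

/-- The `q`-th Frobenius power `J^{[q]}` of an ideal. -/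
def frobPow {R : Type*} [CommRing R] (J : Ideal R) (q : ℕ) : Ideal R :=
  Ideal.span ((fun x => x ^ q) '' (J : Set R))

/-- The `a`-tight closure of an ideal `J` in a ring of characteristic `p`. -/
def aTightClosure {R : Type*} [CommRing R] (p : ℕ) (a J : Ideal R) : Set R :=
  {z | ∃ c ∈ ringReg R, ∃ E : ℕ, ∀ e ≥ E, ∀ y ∈ a ^ (p ^ e),
    c * y * z ^ (p ^ e) ∈ frobPow J (p ^ e)}

/-- Membership in the integral closure of an ideal `J`: `x` satisfies an equation
`x^k + a₁x^{k-1} + ⋯ + a_k = 0` with `aᵢ ∈ J^i`. -/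
def memIntCl {R : Type*} [CommRing R] (J : Ideal R) (x : R) : Prop :=
  ∃ k : ℕ, 1 ≤ k ∧ ∃ a : ℕ → R, (∀ i ∈ Finset.Icc 1 k, a i ∈ J ^ i) ∧
    x ^ k + ∑ i ∈ Finset.Icc 1 k, a i * x ^ (k - i) = 0


private lemma ideal_sum_le {R : Type*} [CommRing R] {ι : Type*} (s : Finset ι)
    (T : ι → Ideal R) (K : Ideal R) (h : ∀ j ∈ s, T j ≤ K) : ∑ j ∈ s, T j ≤ K := by
  classical
  induction s using Finset.induction with
  | empty => simp
  | insert _ _ hj ih =>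
      rw [Finset.sum_insert hj, Submodule.add_eq_sup]
      exact sup_le (h _ (by simp)) (ih fun j hjs => h j (by simp [hjs]))

private lemma ideal_le_sum {R : Type*} [CommRing R] {ι : Type*} {s : Finset ι}
    (T : ι → Ideal R) {j : ι} (hj : j ∈ s) : T j ≤ ∑ i ∈ s, T i := by
  classical
  rw [← Finset.add_sum_erase _ _ hj, Submodule.add_eq_sup]
  exact le_sup_left

/-- Pigeonhole: `(f₁,…,f_{d+1})^{(d+1)m} ⊆ (f₁^m,…,f_{d+1}^m)`. -/
private lemma span_range_pow_le {R : Type*} [CommRing R] :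
    ∀ (d : ℕ) (f : Fin (d + 1) → R) (m : ℕ),
      (Ideal.span (Set.range f)) ^ ((d + 1) * m) ≤ Ideal.span (Set.range fun i => f i ^ m) := by
  intro d
  induction d with
  | zero =>
      intro f m
      have h1 : Set.range f = {f 0} := by
        rw [Fin.range_fin_succ]; simp
      have h2 : (Set.range fun i => f i ^ m) = {f 0 ^ m} := by
        rw [Fin.range_fin_succ (f := fun i => f i ^ m)]; simp
      have h3 : (0 + 1) * m = m := by omega
      rw [h1, h2, Ideal.span_singleton_pow, h3]
  | succ d ih =>
      intro f m
      rw [Fin.range_fin_succ f, Set.insert_eq, Ideal.span_union]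
      have hsplit : (d + 1 + 1) * m = m + (d + 1) * m := by ring
      rw [hsplit]
      refine le_trans Ideal.sup_pow_add_le_pow_sup_pow (sup_le ?_ ?_)
      · rw [Ideal.span_singleton_pow, Ideal.span_singleton_le_iff_mem]
        exact Ideal.subset_span ⟨0, rfl⟩
      · refine le_trans (ih (Fin.tail f) m) (Ideal.span_mono ?_)
        rintro _ ⟨i, rfl⟩
        exact ⟨i.succ, rfl⟩

/-- If `x` is integral over `J` with equation of degree `k`, then `x^{k-1+q} ∈ J^q`. -/
private lemma intCl_pow {R : Type*} [CommRing R] {J : Ideal R} {x : R}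
    (h : memIntCl J x) : ∃ k, 1 ≤ k ∧ ∀ q, x ^ (k - 1 + q) ∈ J ^ q := by
  classical
  obtain ⟨k, hk, a, ha, heq⟩ := h
  refine ⟨k, hk, ?_⟩
  set L : ℕ → Ideal R := fun q =>
    ∑ j ∈ Finset.range k, J ^ (q + (k - 1 - j)) * Ideal.span {x ^ j} with hL
  have hxk : x ^ k ∈ ∑ i ∈ Finset.Icc 1 k, J ^ i * Ideal.span {x ^ (k - i)} := by
    have hx : x ^ k = -∑ i ∈ Finset.Icc 1 k, a i * x ^ (k - i) :=
      eq_neg_of_add_eq_zero_left heq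
    rw [hx]
    refine neg_mem (Submodule.sum_mem _ fun i hi => ?_)
    exact ideal_le_sum _ hi (Ideal.mul_mem_mul (ha i hi) (Ideal.mem_span_singleton_self _))
  have key : ∀ q, x ^ (k - 1 + q) ∈ L q := by
    intro q
    induction q with
    | zero =>
        have hle := ideal_le_sum (s := Finset.range k)
          (fun j => J ^ (0 + (k - 1 - j)) * Ideal.span {x ^ j})
          (j := k - 1) (Finset.mem_range.mpr (by omega))
        refine hle ?_
        have h0 : (0 : ℕ) + (k - 1 - (k - 1)) = 0 := by omega
        simp only [h0, pow_zero, Ideal.top_mul]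
        simpa using Ideal.mem_span_singleton_self (x ^ (k - 1))
    | succ q ih =>
        have hmul : x ^ (k - 1 + (q + 1)) = x ^ (k - 1 + q) * x := by
          rw [← pow_succ, Nat.add_assoc]
        rw [hmul]
        have hmem : x ^ (k - 1 + q) * x ∈ L q * Ideal.span {x} :=
          Ideal.mul_mem_mul ih (Ideal.mem_span_singleton_self x)
        refine Set.mem_of_mem_of_subset hmem (?_ : (L q * Ideal.span {x} : Ideal R) ≤ L (q + 1))
        simp only [hL]
        rw [Finset.sum_mul]
        refine ideal_sum_le _ _ _ fun j hj => ?_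
        have hjk : j < k := Finset.mem_range.mp hj
        have hterm : J ^ (q + (k - 1 - j)) * Ideal.span {x ^ j} * Ideal.span {x} =
            J ^ (q + (k - 1 - j)) * Ideal.span {x ^ (j + 1)} := by
          rw [mul_assoc, Ideal.span_singleton_mul_span_singleton, ← pow_succ]
        rw [hterm]
        by_cases hj1 : j + 1 < k
        · have he : q + (k - 1 - j) = (q + 1) + (k - 1 - (j + 1)) := by omega
          rw [he]
          exact ideal_le_sum (fun j => J ^ (q + 1 + (k - 1 - j)) * Ideal.span {x ^ j})
            (Finset.mem_range.mpr hj1)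
        · -- j = k - 1
          have hje : j = k - 1 := by omega
          have he : q + (k - 1 - j) = q := by omega
          rw [he, hje]
          have hxx : x ^ (k - 1 + 1) = x ^ k := by
            congr 1; omega
          rw [hxx]
          have hs : Ideal.span {x ^ k} ≤ ∑ i ∈ Finset.Icc 1 k, J ^ i * Ideal.span {x ^ (k - i)} := by
            rw [Ideal.span_le]
            exact Set.singleton_subset_iff.mpr hxk
          calc J ^ q * Ideal.span {x ^ k}
              ≤ J ^ q * ∑ i ∈ Finset.Icc 1 k, J ^ i * Ideal.span {x ^ (k - i)} :=
                Ideal.mul_mono le_rfl hs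
            _ = ∑ i ∈ Finset.Icc 1 k, J ^ q * (J ^ i * Ideal.span {x ^ (k - i)}) := by
                rw [Finset.mul_sum]
            _ ≤ ∑ j ∈ Finset.range k, J ^ ((q + 1) + (k - 1 - j)) * Ideal.span {x ^ j} := by
                refine ideal_sum_le _ _ _ fun i hi => ?_
                obtain ⟨hi1, hik⟩ := Finset.mem_Icc.mp hi
                have he2 : J ^ q * (J ^ i * Ideal.span {x ^ (k - i)}) =
                    J ^ ((q + 1) + (k - 1 - (k - i))) * Ideal.span {x ^ (k - i)} := by
                  rw [← mul_assoc, ← pow_add]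
                  have hqe : q + i = (q + 1) + (k - 1 - (k - i)) := by omega
                  rw [hqe]
                rw [he2]
                exact ideal_le_sum (fun j => J ^ ((q + 1) + (k - 1 - j)) * Ideal.span {x ^ j})
                  (j := k - i) (Finset.mem_range.mpr (by omega))
  intro q
  refine Set.mem_of_mem_of_subset (key q) (ideal_sum_le _ _ _ fun j hj => ?_)
  calc J ^ (q + (k - 1 - j)) * Ideal.span {x ^ j} ≤ J ^ (q + (k - 1 - j)) := Ideal.mul_le_left
    _ ≤ J ^ q := Ideal.pow_le_pow_right (by omega)

/-- Let `(R,m)` be a `d`-dimensional (excellent) Cohen–Macaulay normal local domain of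
characteristic `p > 0`, `I = (f₁,…,f_d)` a parameter ideal, and `n, l ≥ 1` with
`dl − n ≥ 1`.  Then `closure(I^{dl−n}) + I^{[l]} ⊆ (I^{[l]})^{*I^n}`. -/
theorem stmt16 {R : Type*} [CommRing R] [IsNoetherianRing R] [IsLocalRing R]
    [IsDomain R] [IsIntegrallyClosed R]
    (p : ℕ) (hp : p.Prime) [CharP R p]
    {d : ℕ} (hd : 2 ≤ d) (hdim : (d : WithBot ℕ∞) = ringKrullDim R)
    (hCM : ∃ rs : List R, (∀ r ∈ rs, r ∈ IsLocalRing.maximalIdeal R) ∧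
      RingTheory.Sequence.IsRegular R rs ∧ (rs.length : WithBot ℕ∞) = ringKrullDim R)
    (f : Fin d → R)
    (hparam : (Ideal.span (Set.range f)).radical = IsLocalRing.maximalIdeal R)
    (n l : ℕ) (hn : 1 ≤ n) (hl : 1 ≤ l) (hln : n + 1 ≤ d * l) :
    ∀ x, memIntCl ((Ideal.span (Set.range f)) ^ (d * l - n)) x →
      ∀ y ∈ Ideal.span (Set.range fun i => f i ^ l),
        x + y ∈ aTightClosure p ((Ideal.span (Set.range f)) ^ n)
          (Ideal.span (Set.range fun i => f i ^ l)) := by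
  intro x hx y hy
  classical
  haveI := Fact.mk hp
  set I := Ideal.span (Set.range f) with hI
  set Il := Ideal.span (Set.range fun i => f i ^ l) with hIl
  have hreg : ∀ c : R, c ≠ 0 → c ∈ ringReg R := by
    intro c hc P hP hcP
    have hPbot : P = ⊥ :=
      le_bot_iff.mp (hP.2 ⟨Ideal.bot_prime, bot_le⟩ bot_le)
    rw [hPbot] at hcP
    exact hc (Ideal.mem_bot.mp hcP)
  have hfrobmem : ∀ (q : ℕ) (z : R), z ∈ Il → z ^ q ∈ frobPow Il q := by
    intro q z hz
    exact Ideal.subset_span ⟨z, hz, rfl⟩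
  by_cases hx0 : x = 0
  · refine ⟨1, hreg 1 one_ne_zero, 0, fun e _ w _ => ?_⟩
    rw [hx0, zero_add, one_mul]
    exact Ideal.mul_mem_left _ w (hfrobmem _ y hy)
  · obtain ⟨k, hk, hpow⟩ := intCl_pow hx
    refine ⟨x ^ (k - 1), hreg _ (pow_ne_zero _ hx0), 0, fun e _ w hw => ?_⟩
    set q := p ^ e with hq
    have hfr : (x + y) ^ q = x ^ q + y ^ q := add_pow_char_pow x y p e
    rw [hfr, mul_add]
    refine Ideal.add_mem _ ?_ (Ideal.mul_mem_left _ _ (hfrobmem q y hy))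
    -- main term
    have h1 : x ^ (k - 1) * x ^ q ∈ (I ^ (d * l - n)) ^ q := by
      rw [← pow_add]; exact hpow q
    have h2 : w * (x ^ (k - 1) * x ^ q) ∈ (I ^ n) ^ q * (I ^ (d * l - n)) ^ q :=
      Ideal.mul_mem_mul hw h1
    have h3 : (I ^ n) ^ q * (I ^ (d * l - n)) ^ q = I ^ (d * (l * q)) := by
      rw [← pow_mul, ← pow_mul, ← pow_add]
      congr 1
      have : n ≤ d * l := by omega
      calc n * q + (d * l - n) * q = (n + (d * l - n)) * q := by ring
        _ = d * l * q := by rw [Nat.add_sub_cancel' this]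
        _ = d * (l * q) := by ring
    obtain ⟨d', rfl⟩ : ∃ d', d = d' + 1 := ⟨d - 1, by omega⟩
    have h4 : I ^ ((d' + 1) * (l * q)) ≤ Ideal.span (Set.range fun i => f i ^ (l * q)) :=
      span_range_pow_le d' f (l * q)
    have h5 : Ideal.span (Set.range fun i => f i ^ (l * q)) ≤ frobPow Il q := by
      rw [Ideal.span_le]
      rintro _ ⟨i, rfl⟩
      show f i ^ (l * q) ∈ frobPow Il q
      rw [pow_mul]
      exact hfrobmem q (f i ^ l) (Ideal.subset_span ⟨i, rfl⟩)
    have h6 : w * (x ^ (k - 1) * x ^ q) ∈ frobPow Il q := by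
      rw [h3] at h2
      exact h5 (h4 h2)
    have harr : x ^ (k - 1) * w * x ^ q = w * (x ^ (k - 1) * x ^ q) := by ring
    rw [harr]
    exact h6
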